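/- Under the hypotheses of the Kac model with partial Maxwellian thermostat: if S(Qh) ≤ S(h), Σ_{j=2}^N S(P₁Q_{1j}h) ≤ (N−1−1/2)S(h), and P₁ is an entropy-contracting projection, then for all t ≥ 0, S(e^{μ(P₁−I)t}Qh) ≤ (1 − (1−e^{−μt})/(N(N−1)))·S(h). -/

import Mathlib

open Finset

lemma card_lt_pairs_aux (N : ℕ) :
    (univ.filter fun p : Fin N × Fin N => p.1 < p.2).card = N.choose 2 := by
  rw [Finset.card_filter, Fintype.sum_prod_type_right]
  have h1 : ∀ j : Fin N, (∑ i : Fin N, if i < j then 1 else 0) = (j : ℕ) := by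
    intro j
    rw [← Finset.card_filter]
    have h2 : (univ.filter fun i : Fin N => i < j) = Finset.Iio j :=
      Finset.filter_gt_eq_Iio
    rw [h2, Fin.card_Iio]
  simp only [h1]
  rw [Fin.sum_univ_eq_sum_range (fun i => i) N, Finset.sum_range_id,
    Nat.choose_two_right]

set_option maxHeartbeats 1000000

/-- If S is convex, S(Q_{ij}h) ≤ S(h) for all i<j (hence S(Qh) ≤ S(h)),
Σ_{j=2}^N S(P₁Q_{1j}h) ≤ (N−3/2)S(h), and P₁ is an entropy-contracting projection,
then S(e^{μ(P₁−I)t}Qh) ≤ (1 − (1−e^{−μt})/(N(N−1)))S(h), where Q is the Kac average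
and e^{μ(P₁−I)t} = e^{−μt}I + (1−e^{−μt})P₁ since P₁ is a projection. -/
theorem entropy_exp_thermostat_kac {E : Type*} [AddCommGroup E] [Module ℝ E]
    (N : ℕ) (hN : 2 ≤ N) (S : E → ℝ)
    (hconv : ∀ a b : ℝ, 0 ≤ a → 0 ≤ b → a + b = 1 →
      ∀ x y : E, S (a • x + b • y) ≤ a * S x + b * S y)
    (Qij : Fin N → Fin N → E →ₗ[ℝ] E) (P1 : E →ₗ[ℝ] E)
    (hP1idem : P1 ∘ₗ P1 = P1)
    (hP1entropy : ∀ u : E, S (P1 u) ≤ S u)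
    (h : E)
    (hQij : ∀ i j : Fin N, i < j → S (Qij i j h) ≤ S h)
    (hQ : S ((((N.choose 2 : ℝ))⁻¹ • ∑ p ∈ univ.filter
        (fun p : Fin N × Fin N => p.1 < p.2), Qij p.1 p.2) h) ≤ S h)
    (hP1Q1j : ∑ j ∈ univ.filter (fun j : Fin N => (⟨0, by omega⟩ : Fin N) < j),
        S (P1 (Qij ⟨0, by omega⟩ j h)) ≤ ((N : ℝ) - 3 / 2) * S h)
    (t mu : ℝ) (ht : 0 ≤ t) (hmu : 0 < mu) :
    S (Real.exp (-mu * t) •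
          (((N.choose 2 : ℝ))⁻¹ • ∑ p ∈ univ.filter
            (fun p : Fin N × Fin N => p.1 < p.2), Qij p.1 p.2) h
        + (1 - Real.exp (-mu * t)) •
          P1 ((((N.choose 2 : ℝ))⁻¹ • ∑ p ∈ univ.filter
            (fun p : Fin N × Fin N => p.1 < p.2), Qij p.1 p.2) h))
      ≤ (1 - (1 - Real.exp (-mu * t)) / (N * (N - 1 : ℝ))) * S h := by
  classical
  set z : Fin N := ⟨0, by omega⟩ with hz
  set A : Finset (Fin N × Fin N) := univ.filter (fun p : Fin N × Fin N => p.1 < p.2)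
    with hA
  set c : ℝ := (N.choose 2 : ℝ) with hc
  set n : ℝ := (N : ℝ) with hn
  have hn2 : (2 : ℝ) ≤ n := by rw [hn]; exact_mod_cast hN
  -- basic facts about c
  have hchoose2 : N.choose 2 * 2 = N * (N - 1) := by
    rw [Nat.choose_two_right, Nat.div_mul_cancel]
    obtain ⟨k, hk⟩ := Nat.even_mul_succ_self (N - 1)
    have h1 : N * (N - 1) = (N - 1) * (N - 1 + 1) := by
      rw [mul_comm]; congr 1; omega
    exact ⟨k, by rw [h1, hk]; ring⟩
  have hcval : 2 * c = n * (n - 1) := by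
    have h1 : ((N.choose 2 * 2 : ℕ) : ℝ) = ((N * (N - 1) : ℕ) : ℝ) := by
      rw [hchoose2]
    push_cast [Nat.cast_sub (by omega : 1 ≤ N)] at h1
    rw [← hc, ← hn] at h1
    linarith
  have hcpos : 0 < c := by nlinarith [hcval, hn2]
  have hcard : (A.card : ℝ) = c := by
    rw [hA, card_lt_pairs_aux, hc]
  set QH : E := ((c⁻¹ • ∑ p ∈ A, Qij p.1 p.2 : E →ₗ[ℝ] E)) h with hQH
  have happ : QH = ∑ p ∈ A, c⁻¹ • (Qij p.1 p.2 h) := by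
    rw [hQH]
    simp only [LinearMap.smul_apply, LinearMap.coe_sum, Finset.sum_apply,
      Finset.smul_sum]
  have hP1app : P1 QH = ∑ p ∈ A, c⁻¹ • (P1 (Qij p.1 p.2 h)) := by
    rw [happ, map_sum]
    simp only [map_smul]
  have hSconv : ConvexOn ℝ Set.univ S :=
    ⟨convex_univ, fun x _ y _ a b ha hb hab => hconv a b ha hb hab x y⟩
  have hwsum : ∑ _p ∈ A, c⁻¹ = 1 := by
    rw [Finset.sum_const, nsmul_eq_mul, hcard, mul_inv_cancel₀ hcpos.ne']
  have hJensen : S (∑ p ∈ A, c⁻¹ • (P1 (Qij p.1 p.2 h)))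
      ≤ ∑ p ∈ A, c⁻¹ * S (P1 (Qij p.1 p.2 h)) :=
    hSconv.map_sum_le (fun _ _ => by positivity) hwsum (fun _ _ => Set.mem_univ _)
  -- split the sum over pairs according to whether p.1 = z
  have hsplit := Finset.sum_filter_add_sum_filter_not A (fun p => p.1 = z)
    (fun p => c⁻¹ * S (P1 (Qij p.1 p.2 h)))
  have hIoi : (univ.filter fun j : Fin N => z < j) = Finset.Ioi z :=
    Finset.filter_lt_eq_Ioi
  -- the p.1 = z part as an image
  have himg : A.filter (fun p => p.1 = z)
      = (Finset.Ioi z).map ⟨fun j => ((z, j) : Fin N × Fin N),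
          fun a b hab => (Prod.ext_iff.mp hab).2⟩ := by
    ext p
    rcases p with ⟨p1, p2⟩
    simp only [hA, Finset.mem_filter, Finset.mem_univ, true_and, Finset.mem_map,
      Finset.mem_Ioi, Function.Embedding.coeFn_mk, Prod.mk.injEq]
    constructor
    · rintro ⟨hlt, hz'⟩
      subst hz'
      exact ⟨p2, hlt, rfl⟩
    · rintro ⟨j, hj, hjeq⟩
      cases hjeq
      exact ⟨hj, rfl⟩
  have hbij : ∑ p ∈ A.filter (fun p => p.1 = z), c⁻¹ * S (P1 (Qij p.1 p.2 h))
      = ∑ j ∈ Finset.Ioi z, c⁻¹ * S (P1 (Qij z j h)) := by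
    rw [himg, Finset.sum_map]
    rfl
  have hcard1 : ((A.filter (fun p => p.1 = z)).card : ℝ) = n - 1 := by
    rw [himg, Finset.card_map, Fin.card_Ioi]
    have h1 : N - 1 - (z : ℕ) = N - 1 := by simp [hz]
    rw [h1, Nat.cast_sub (by omega : 1 ≤ N), Nat.cast_one, hn]
  have hpart1 : ∑ p ∈ A.filter (fun p => p.1 = z), c⁻¹ * S (P1 (Qij p.1 p.2 h))
      ≤ c⁻¹ * ((n - 3 / 2) * S h) := by
    rw [hbij, ← Finset.mul_sum]
    rw [hIoi] at hP1Q1j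
    exact mul_le_mul_of_nonneg_left hP1Q1j (by positivity)
  -- the p.1 ≠ z part
  have hpart2 : ∑ p ∈ A.filter (fun p => ¬ p.1 = z), c⁻¹ * S (P1 (Qij p.1 p.2 h))
      ≤ ((A.filter (fun p => ¬ p.1 = z)).card : ℝ) * (c⁻¹ * S h) := by
    rw [← nsmul_eq_mul, ← Finset.sum_const]
    apply Finset.sum_le_sum
    intro p hp
    simp only [hA, Finset.mem_filter, Finset.mem_univ, true_and] at hp
    exact mul_le_mul_of_nonneg_left
      ((hP1entropy _).trans (hQij p.1 p.2 hp.1)) (by positivity)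
  have hcard2 : ((A.filter (fun p => ¬ p.1 = z)).card : ℝ) = c - (n - 1) := by
    have hsum := Finset.card_filter_add_card_filter_not
      (s := A) (p := fun p => p.1 = z)
    have h2 : ((A.filter (fun p => p.1 = z)).card : ℝ)
        + ((A.filter (fun p => ¬ p.1 = z)).card : ℝ) = (A.card : ℝ) := by
      exact_mod_cast congrArg (Nat.cast : ℕ → ℝ) hsum
    rw [hcard1, hcard] at h2
    linarith
  -- combine: bound for S (P1 QH)
  have hn1pos : 0 < n * (n - 1) := by nlinarith
  have hP1Q : S (P1 QH) ≤ (1 - 1 / (n * (n - 1))) * S h := by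
    rw [hP1app]
    refine hJensen.trans ?_
    rw [← hsplit]
    refine (add_le_add hpart1 hpart2).trans (le_of_eq ?_)
    rw [hcard2, show n * (n - 1) = 2 * c from by linarith]
    field_simp
    ring
  -- final convexity step
  set a : ℝ := Real.exp (-mu * t) with ha
  have ha0 : 0 < a := Real.exp_pos _
  have ha1 : a ≤ 1 := Real.exp_le_one_iff.mpr (by nlinarith)
  have hb0 : 0 ≤ 1 - a := by linarith
  have hmain := hconv a (1 - a) ha0.le hb0 (by ring) QH (P1 QH)
  refine hmain.trans ?_
  have h1 : a * S QH ≤ a * S h := mul_le_mul_of_nonneg_left hQ ha0.le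
  have h2 : (1 - a) * S (P1 QH) ≤ (1 - a) * ((1 - 1 / (n * (n - 1))) * S h) :=
    mul_le_mul_of_nonneg_left hP1Q hb0
  refine (add_le_add h1 h2).trans (le_of_eq ?_)
  ring
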